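/- Define coefficients A_{[l,2;k,i]} = a(l,2;k,i)/d(l,2) with a(l,2;k,0) = (l+2-k)(l+1-k)(l-k), a(l,2;k,1) = -(l+2-k)(l+1-k)(l-4k), a(l,2;k,2) = -3(l+2-k)(l-2k+2)k, a(l,2;k,3) = -(3l-4k+8)k(k-1), a(l,2;k,4) = -k(k-1)(k-2), d(l,2) = (l+2)(l+1)l. Then for l ≥ 1 the linear map I^l_2: V_{l+2} → V_l ⊗ V_4 given by I^l_2(v_k^{(l+2)}) = Σ_{i=0}^4 A_{[l,2;k,i]}·v_{k+1-i}^{(l)} ⊗ w_i (with out-of-range basis vectors set to 0) is a nonzero sl(2,C)-equivariant map. -/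

import Mathlib

noncomputable section

namespace Stmt7


/-- The delta basis vector `v_k` of the sl(2,ℂ)-module `V_n`, realized inside `ℤ → ℂ`. -/
def dv (k : ℤ) : ℤ → ℂ := fun j => if j = k then 1 else 0

/-- `H` on `V_n`: `H·v_k = (n-2k)v_k`. -/
def Hv (n : ℤ) (f : ℤ → ℂ) : ℤ → ℂ := fun j => ((n - 2 * j : ℤ) : ℂ) * f j
/-- `E` on `V_n`: `E·v_k = -k·v_{k-1}`. -/
def Ev (f : ℤ → ℂ) : ℤ → ℂ := fun j => ((-(j + 1) : ℤ) : ℂ) * f (j + 1)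
/-- `F` on `V_n`: `F·v_k = (k-n)·v_{k+1}`. -/
def Fv (n : ℤ) (f : ℤ → ℂ) : ℤ → ℂ := fun j => ((j - 1 - n : ℤ) : ℂ) * f (j - 1)

/-- The diagonal action of `H` on `V_l ⊗ V_4`, components indexed by `(q, i)`. -/
def Ht (l : ℤ) (f : ℤ × ℤ → ℂ) : ℤ × ℤ → ℂ :=
  fun p => ((l + 4 - 2 * p.1 - 2 * p.2 : ℤ) : ℂ) * f p
/-- The diagonal action of `E` on `V_l ⊗ V_4`. -/
def Et (f : ℤ × ℤ → ℂ) : ℤ × ℤ → ℂ :=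
  fun p => ((-(p.1 + 1) : ℤ) : ℂ) * f (p.1 + 1, p.2) + ((-(p.2 + 1) : ℤ) : ℂ) * f (p.1, p.2 + 1)
/-- The diagonal action of `F` on `V_l ⊗ V_4`. -/
def Ft (l : ℤ) (f : ℤ × ℤ → ℂ) : ℤ × ℤ → ℂ :=
  fun p => ((p.1 - 1 - l : ℤ) : ℂ) * f (p.1 - 1, p.2) + ((p.2 - 5 : ℤ) : ℂ) * f (p.1, p.2 - 1)

/-- The Clebsch–Gordan coefficients `A_{[l,2;k,i]} = a(l,2;k,i)/d(l,2)`. -/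
def Acoef (l k i : ℤ) : ℂ :=
  (if i = 0 then ((l+2-k)*(l+1-k)*(l-k) : ℤ)
   else if i = 1 then (-((l+2-k)*(l+1-k)*(l-4*k)) : ℤ)
   else if i = 2 then (-(3*(l+2-k)*(l-2*k+2)*k) : ℤ)
   else if i = 3 then (-((3*l-4*k+8)*k*(k-1)) : ℤ)
   else if i = 4 then (-(k*(k-1)*(k-2)) : ℤ) else 0 : ℤ)
    / (((l+2)*(l+1)*l : ℤ) : ℂ)

/-- The map `I^l_2 : V_{l+2} → V_l ⊗ V_4`, whose `(q,i)`-component of `I f` receives the contribution from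
`k = p.1 + p.2 - 1`. -/
def Iop (l : ℤ) (f : ℤ → ℂ) : ℤ × ℤ → ℂ :=
  fun p => if 0 ≤ p.2 ∧ p.2 ≤ 4 then Acoef l (p.1 + p.2 - 1) p.2 * f (p.1 + p.2 - 1) else 0

set_option maxHeartbeats 2000000 in
/-- `I^l_2 : V_{l+2} → V_l ⊗ V_4` is a nonzero sl(2,ℂ)-equivariant map. -/
theorem stmt_7 (l : ℤ) (hl : 1 ≤ l) :
    (∀ k : ℤ, 0 ≤ k → k ≤ l + 2 →
      Iop l (Hv (l + 2) (dv k)) = Ht l (Iop l (dv k)) ∧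
      Iop l (Ev (dv k)) = Et (Iop l (dv k)) ∧
      Iop l (Fv (l + 2) (dv k)) = Ft l (Iop l (dv k))) ∧
    (∃ k : ℤ, 0 ≤ k ∧ k ≤ l + 2 ∧ Iop l (dv k) ≠ 0) := by

  have hlp : (0:ℤ) < (l+2)*(l+1)*l := by
    have h1 : (0:ℤ) < l := hl
    have h2 : (0:ℤ) < l + 1 := by omega
    have h3 : (0:ℤ) < l + 2 := by omega
    exact mul_pos (mul_pos h3 h2) h1
  have hd : (((l+2)*(l+1)*l : ℤ) : ℂ) ≠ 0 := Int.cast_ne_zero.mpr (ne_of_gt hlp)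
  have hd' : ((l:ℂ)+2)*((l:ℂ)+1)*(l:ℂ) ≠ 0 := by push_cast at hd; exact hd
  constructor
  · intro k hk0 hk2
    refine ⟨?_, ?_, ?_⟩
    · funext p
      obtain ⟨q, i⟩ := p
      simp only [Iop, Hv, Ht, dv]
      split_ifs <;> push_cast <;> ring1
    · funext p
      obtain ⟨q, i⟩ := p
      obtain hi | hi | hi | hi | hi | hi | hi | hi :
          i ≤ -2 ∨ i = -1 ∨ i = 0 ∨ i = 1 ∨ i = 2 ∨ i = 3 ∨ i = 4 ∨ 5 ≤ i := by omega
      · have h1 : ¬(0 ≤ i ∧ i ≤ 4) := by omega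
        have h2 : ¬(0 ≤ i + 1 ∧ i + 1 ≤ 4) := by omega
        simp [Iop, Et, h1, h2]
        intro h3 h4; exfalso; omega
      · subst hi
        simp only [Iop, Et, Ev, dv, Acoef]
        norm_num
      · subst hi
        simp only [Iop, Et, Ev, dv, Acoef]
        norm_num
        split_ifs <;>
          first
            | ring1
            | (exfalso; omega)
            | (have hq : q = k := by omega; subst hq; push_cast; field_simp [hd']; ring1)
      · subst hi
        simp only [Iop, Et, Ev, dv, Acoef]
        norm_num
        split_ifs <;>
          first
            | ring1
            | (exfalso; omega)
            | (have hq : q = k - 1 := by omega; subst hq; push_cast; field_simp [hd']; ring1)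
      · subst hi
        simp only [Iop, Et, Ev, dv, Acoef]
        norm_num
        split_ifs <;>
          first
            | ring1
            | (exfalso; omega)
            | (have hq : q = k - 2 := by omega; subst hq; push_cast; field_simp [hd']; ring1)
      · subst hi
        simp only [Iop, Et, Ev, dv, Acoef]
        norm_num
        split_ifs <;>
          first
            | ring1
            | (exfalso; omega)
            | (have hq : q = k - 3 := by omega; subst hq; push_cast; field_simp [hd']; ring1)
      · subst hi
        simp only [Iop, Et, Ev, dv, Acoef]
        norm_num
        split_ifs <;>
          first
            | ring1
            | (exfalso; omega)
            | (have hq : q = k - 4 := by omega; subst hq; push_cast; field_simp [hd']; ring1)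
      · have h1 : ¬(0 ≤ i ∧ i ≤ 4) := by omega
        have h2 : ¬(0 ≤ i + 1 ∧ i + 1 ≤ 4) := by omega
        simp [Iop, Et, h1, h2]
        intro h3 h4; exfalso; omega
    · funext p
      obtain ⟨q, i⟩ := p
      obtain hi | hi | hi | hi | hi | hi | hi | hi | hi :
          i ≤ -1 ∨ i = 0 ∨ i = 1 ∨ i = 2 ∨ i = 3 ∨ i = 4 ∨ i = 5 ∨ i = 6 ∨ 7 ≤ i := by omega
      · have h1 : ¬(0 ≤ i ∧ i ≤ 4) := by omega
        have h2 : ¬(0 ≤ i - 1 ∧ i - 1 ≤ 4) := by omega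
        have h3 : ¬(1 ≤ i ∧ i ≤ 5) := by omega
        simp [Iop, Ft, h1, h2, h3]
      · subst hi
        simp only [Iop, Ft, Fv, dv, Acoef]
        norm_num
        split_ifs <;>
          first
            | ring1
            | (exfalso; omega)
            | (have hq : q = k + 2 := by omega; subst hq; push_cast; field_simp [hd']; ring1)
      · subst hi
        simp only [Iop, Ft, Fv, dv, Acoef]
        norm_num
        split_ifs <;>
          first
            | ring1
            | (exfalso; omega)
            | (have hq : q = k + 1 := by omega; subst hq; push_cast; field_simp [hd']; ring1)
      · subst hi
        simp only [Iop, Ft, Fv, dv, Acoef]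
        norm_num
        split_ifs <;>
          first
            | ring1
            | (exfalso; omega)
            | (have hq : q = k := by omega; subst hq; push_cast; field_simp [hd']; ring1)
      · subst hi
        simp only [Iop, Ft, Fv, dv, Acoef]
        norm_num
        split_ifs <;>
          first
            | ring1
            | (exfalso; omega)
            | (have hq : q = k - 1 := by omega; subst hq; push_cast; field_simp [hd']; ring1)
      · subst hi
        simp only [Iop, Ft, Fv, dv, Acoef]
        norm_num
        split_ifs <;>
          first
            | ring1
            | (exfalso; omega)
            | (have hq : q = k - 2 := by omega; subst hq; push_cast; field_simp [hd']; ring1)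
      · subst hi
        simp only [Iop, Ft, Fv, dv, Acoef]
        norm_num
        try (split_ifs <;>
          first
            | ring1
            | (exfalso; omega)
            | (have hq : q = k - 3 := by omega; subst hq; push_cast; field_simp [hd']; ring1))
      · subst hi
        simp only [Iop, Ft, Fv, dv, Acoef]
        try norm_num
      · have h1 : ¬(0 ≤ i ∧ i ≤ 4) := by omega
        have h2 : ¬(0 ≤ i - 1 ∧ i - 1 ≤ 4) := by omega
        have h3 : ¬(1 ≤ i ∧ i ≤ 5) := by omega
        simp [Iop, Ft, h1, h2, h3]
  · refine ⟨0, le_refl 0, by omega, ?_⟩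
    intro h
    have h1 := congrFun h (1, 0)
    simp only [Iop, dv, Acoef, Pi.zero_apply] at h1
    norm_num at h1
    have h2 : ((l:ℂ)+2)*((l:ℂ)+1)*(l:ℂ) = 0 := by
      rcases h1 with (h1 | h1) | h1 <;> rw [h1] <;> ring
    exact hd' h2


end Stmt7
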